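/- If two sequences X and Y of length N have Hamming distance d, then for each position i where they differ, at most k of the k-mer windows containing i are affected; consequently the L1 distance between their k-mer count vectors satisfies ∑_w |Φ_k(X)(w) - Φ_k(Y)(w)| ≤ 2·k·d_H(X,Y). -/

import Mathlib

def phi {A : Type*} [DecidableEq A] {N k : ℕ} (hk : k ≤ N) (X : Fin N → A)
    (w : Fin k → A) : ℕ :=
  (Finset.univ.filter (fun i : Fin (N - k + 1) =>
    (fun j : Fin k => X ⟨i + j, by have := i.2; have := j.2; omega⟩) = w)).card

def hamming {n : ℕ} {A : Type*} [DecidableEq A] (X Y : Fin n → A) : ℕ :=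
  (Finset.univ.filter (fun i => X i ≠ Y i)).card

theorem phi_l1_stability {A : Type*} [Fintype A] [DecidableEq A] {N k : ℕ}
    (hk : k ≤ N) (X Y : Fin N → A) :
    ∑ w : Fin k → A, |(phi hk X w : ℝ) - (phi hk Y w : ℝ)|
      ≤ 2 * k * (hamming X Y : ℝ) := by
  classical
  set M := N - k + 1 with hM
  let f : Fin M → (Fin k → A) := fun i j => X ⟨i + j, by have := i.2; have := j.2; omega⟩
  let g : Fin M → (Fin k → A) := fun i j => Y ⟨i + j, by have := i.2; have := j.2; omega⟩
  have hphiX : ∀ w, phi hk X w = (Finset.univ.filter (fun i : Fin M => f i = w)).card :=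
    fun w => rfl
  have hphiY : ∀ w, phi hk Y w = (Finset.univ.filter (fun i : Fin M => g i = w)).card :=
    fun w => rfl
  let D : Finset (Fin M) := Finset.univ.filter (fun i => f i ≠ g i)
  have key : ∑ w : Fin k → A, |(phi hk X w : ℝ) - (phi hk Y w : ℝ)| ≤ 2 * D.card := by
    have h1 : ∀ w : Fin k → A, (phi hk X w : ℝ) - (phi hk Y w : ℝ)
        = ∑ i ∈ D, ((if f i = w then (1:ℝ) else 0) - (if g i = w then (1:ℝ) else 0)) := by
      intro w
      rw [hphiX, hphiY, Finset.card_filter, Finset.card_filter]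
      push_cast
      rw [← Finset.sum_sub_distrib]
      refine (Finset.sum_subset D.subset_univ ?_).symm
      intro i _ hi
      have : f i = g i := by simpa [D] using hi
      simp [this]
    calc ∑ w : Fin k → A, |(phi hk X w : ℝ) - (phi hk Y w : ℝ)|
        ≤ ∑ w : Fin k → A, ∑ i ∈ D,
            ((if f i = w then (1:ℝ) else 0) + (if g i = w then (1:ℝ) else 0)) := by
          refine Finset.sum_le_sum fun w _ => ?_
          rw [h1 w]
          refine (Finset.abs_sum_le_sum_abs _ _).trans (Finset.sum_le_sum fun i _ => ?_)
          have h2 : |(if f i = w then (1:ℝ) else 0) - (if g i = w then (1:ℝ) else 0)|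
              ≤ |(if f i = w then (1:ℝ) else 0)| + |(if g i = w then (1:ℝ) else 0)| :=
            abs_sub _ _
          refine h2.trans ?_
          gcongr <;> [exact le_of_eq (abs_of_nonneg (by positivity));
            exact le_of_eq (abs_of_nonneg (by positivity))]
      _ = ∑ i ∈ D, (∑ w : Fin k → A, (if f i = w then (1:ℝ) else 0)
            + ∑ w : Fin k → A, (if g i = w then (1:ℝ) else 0)) := by
          rw [Finset.sum_comm]
          simp [Finset.sum_add_distrib]
      _ = ∑ i ∈ D, (2:ℝ) := by
          refine Finset.sum_congr rfl fun i _ => ?_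
          simp [Finset.sum_ite_eq, eq_comm]
          norm_num
      _ = 2 * D.card := by simp [mul_comm]
  have hDcard : D.card ≤ k * hamming X Y := by
    rcases Nat.eq_zero_or_pos k with hk0 | hk0
    · subst hk0
      have : D = ∅ := by
        ext i
        simp [D]
        funext j
        exact absurd j.2 (by omega)
      simp [this]
    set E : Finset (Fin N) := Finset.univ.filter (fun p => X p ≠ Y p) with hE
    have hham : hamming X Y = E.card := rfl
    let jj : Fin M → Fin k := fun i =>
      if h : f i ≠ g i then Classical.choose (Function.ne_iff.mp h) else ⟨0, hk0⟩
    have hjj : ∀ i ∈ D, f i (jj i) ≠ g i (jj i) := by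
      intro i hi
      have h : f i ≠ g i := by simpa [D] using hi
      simp only [jj, dif_pos h]
      exact Classical.choose_spec (Function.ne_iff.mp h)
    have hcard : D.card ≤ (E ×ˢ (Finset.univ : Finset (Fin k))).card := by
      refine Finset.card_le_card_of_injOn
        (fun i => (⟨i + jj i, by have := i.2; have := (jj i).2; omega⟩, jj i)) ?_ ?_
      · intro i hi
        rw [Finset.mem_coe]
        simp only [Finset.mem_product, Finset.mem_univ, and_true]
        simp only [hE, Finset.mem_filter, Finset.mem_univ, true_and]
        exact hjj i hi
      · intro i₁ h₁ i₂ h₂ heq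
        simp only [Prod.mk.injEq, Fin.mk.injEq] at heq
        obtain ⟨h3, h4⟩ := heq
        rw [h4] at h3
        exact Fin.ext (by omega)
    have hprod : (E ×ˢ (Finset.univ : Finset (Fin k))).card = E.card * k := by
      simp [Finset.card_product]
    calc D.card ≤ (E ×ˢ (Finset.univ : Finset (Fin k))).card := hcard
      _ = E.card * k := hprod
      _ = k * hamming X Y := by rw [hham, mul_comm]
  calc ∑ w : Fin k → A, |(phi hk X w : ℝ) - (phi hk Y w : ℝ)|
      ≤ 2 * D.card := key
    _ ≤ 2 * k * (hamming X Y : ℝ) := by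
        have h : (D.card : ℝ) ≤ (k : ℝ) * (hamming X Y : ℝ) := by exact_mod_cast hDcard
        linarith
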